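/- Let Prop := {p}, Act := {a,b,c,d,e}, Op_[] := {[α] : α ∈ Act} and Op_⟨⟩ := {⟨α⟩^{≥1} : α ∈ Act}. Let L' be a monotone fragment of ML(Prop,Act) containing the atomic proposition p and such that: ⟨α⟩^{≥k} ∉ Op' for every k ≥ 2 and α ∈ Act; Op_[] ⊆ Op' or Op_⟨⟩ ⊆ Op'; if ∧ ∈ Op' then Op_[] ⊆ Op'; and if ∨ ∈ Op' then Op_⟨⟩ ⊆ Op'. Then for every n ∈ ℕ there exists a sample S = (𝒫,𝒩) of Kripke structures over (Prop, Act) with k := Σ_{K ∈ 𝒫∪𝒩} |Q_K| ≥ n such that some L'-formula is S-separating and every S-separating L'-formula has size at least 2^{k/25}. -/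

import Mathlib

open scoped Classical

/-- Formulas of modal logic `ML(Prop, Act)`:
`φ ::= p | ¬φ | φ∨φ | φ∧φ | ⟨a⟩^{≥k}φ (k ≥ 1) | [a]φ`. -/
inductive MLFormula (P A : Type) : Type
  | atom : P → MLFormula P A
  | not : MLFormula P A → MLFormula P A
  | or : MLFormula P A → MLFormula P A → MLFormula P A
  | and : MLFormula P A → MLFormula P A → MLFormula P A
  | dia : A → ℕ+ → MLFormula P A → MLFormula P A
  | box : A → MLFormula P A → MLFormula P A

/-- A Kripke structure over `(P, A)`: a finite non-empty set of states, a
non-empty set of initial states, transitions labelled by actions, and a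
labelling of states by propositions. -/
structure Kripke (P A : Type) where
  Q : Type
  [finQ : Fintype Q]
  neQ : Nonempty Q
  I : Set Q
  neI : I.Nonempty
  δ : Q → A → Set Q
  π : Q → Set P

attribute [instance] Kripke.finQ

/-- Satisfaction of a modal formula at a state of a Kripke structure. -/
def MLsat {P A : Type} (K : Kripke P A) : MLFormula P A → K.Q → Prop
  | .atom p, q => p ∈ K.π q
  | .not φ, q => ¬ MLsat K φ q
  | .or φ ψ, q => MLsat K φ q ∨ MLsat K ψ q
  | .and φ ψ, q => MLsat K φ q ∧ MLsat K ψ q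
  | .dia a k φ, q => (k : ℕ) ≤ (K.δ q a ∩ {q' | MLsat K φ q'}).ncard
  | .box a φ, q => ∀ q' ∈ K.δ q a, MLsat K φ q'

/-- `K ⊨ φ`: every initial state satisfies `φ`. -/
def MLsatK {P A : Type} (K : Kripke P A) (φ : MLFormula P A) : Prop :=
  ∀ q ∈ K.I, MLsat K φ q

/-- The semantic value of a formula in `K`: the set of states satisfying it. -/
def semK {P A : Type} (K : Kripke P A) (φ : MLFormula P A) : Set K.Q :=
  {q | MLsat K φ q}

/-- A fragment of `ML(Prop, Act)`: a subset of the operators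
(atomic propositions `p`, `¬`, `∨`, `∧`, `⟨a⟩^{≥k}`, `[a]`). -/
structure MLFragment (P A : Type) where
  atoms : Set P
  hasNot : Prop
  hasOr : Prop
  hasAnd : Prop
  dias : Set (A × ℕ+)
  boxes : Set A

/-- A formula belongs to the fragment if it is built using only its operators. -/
def MLFragment.Mem {P A : Type} (F : MLFragment P A) : MLFormula P A → Prop
  | .atom p => p ∈ F.atoms
  | .not φ => F.hasNot ∧ F.Mem φ
  | .or φ ψ => F.hasOr ∧ F.Mem φ ∧ F.Mem ψ
  | .and φ ψ => F.hasAnd ∧ F.Mem φ ∧ F.Mem ψ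
  | .dia a k φ => (a, k) ∈ F.dias ∧ F.Mem φ
  | .box a φ => a ∈ F.boxes ∧ F.Mem φ

/-- The set of subformulas of a modal formula. -/
def MLSub {P A : Type} : MLFormula P A → Set (MLFormula P A)
  | .atom p => {.atom p}
  | .not φ => insert (.not φ) (MLSub φ)
  | .or φ ψ => insert (.or φ ψ) (MLSub φ ∪ MLSub ψ)
  | .and φ ψ => insert (.and φ ψ) (MLSub φ ∪ MLSub ψ)
  | .dia a k φ => insert (.dia a k φ) (MLSub φ)
  | .box a φ => insert (.box a φ) (MLSub φ)

/-- The (syntax-DAG) size of a modal formula: its number of distinct subformulas. -/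
noncomputable def MLsz {P A : Type} (φ : MLFormula P A) : ℕ := (MLSub φ).ncard

/-! ### Generic infrastructure -/

section Infra

open MLFormula

variable {P A : Type}

/-- Tree size of a formula. -/
def tsize : MLFormula P A → ℕ
  | .atom _ => 1
  | .not φ => tsize φ + 1
  | .or φ ψ => tsize φ + tsize ψ + 1
  | .and φ ψ => tsize φ + tsize ψ + 1
  | .dia _ _ φ => tsize φ + 1
  | .box _ φ => tsize φ + 1

lemma tsize_le_of_mem_MLSub {φ ψ : MLFormula P A} (h : ψ ∈ MLSub φ) :
    tsize ψ ≤ tsize φ := by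
  induction φ with
  | atom p => simp only [MLSub, Set.mem_singleton_iff] at h; subst h; exact le_rfl
  | not φ ih =>
      rcases Set.mem_insert_iff.1 h with rfl | h
      · exact le_rfl
      · exact (ih h).trans (by simp only [tsize]; omega)
  | or φ₁ φ₂ ih₁ ih₂ =>
      rcases Set.mem_insert_iff.1 h with rfl | h
      · exact le_rfl
      · rcases h with h | h
        · exact (ih₁ h).trans (by simp only [tsize]; omega)
        · exact (ih₂ h).trans (by simp only [tsize]; omega)
  | and φ₁ φ₂ ih₁ ih₂ =>
      rcases Set.mem_insert_iff.1 h with rfl | h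
      · exact le_rfl
      · rcases h with h | h
        · exact (ih₁ h).trans (by simp only [tsize]; omega)
        · exact (ih₂ h).trans (by simp only [tsize]; omega)
  | dia a k φ ih =>
      rcases Set.mem_insert_iff.1 h with rfl | h
      · exact le_rfl
      · exact (ih h).trans (by simp only [tsize]; omega)
  | box a φ ih =>
      rcases Set.mem_insert_iff.1 h with rfl | h
      · exact le_rfl
      · exact (ih h).trans (by simp only [tsize]; omega)

lemma MLSub_finite (φ : MLFormula P A) : (MLSub φ).Finite := by
  induction φ with
  | atom p => simp [MLSub]
  | not φ ih => exact (ih.insert _)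
  | or φ₁ φ₂ ih₁ ih₂ => exact ((ih₁.union ih₂).insert _)
  | and φ₁ φ₂ ih₁ ih₂ => exact ((ih₁.union ih₂).insert _)
  | dia a k φ ih => exact (ih.insert _)
  | box a φ ih => exact (ih.insert _)

/-- Box-and skeleton: `Skel φ w` means `φ` has a purely box/and path to a `p`-leaf
spelling the word `w`. -/
inductive Skel : MLFormula P A → List A → Prop
  | atom (p : P) : Skel (.atom p) []
  | andL {φ ψ : MLFormula P A} {w} : Skel φ w → Skel (.and φ ψ) w
  | andR {φ ψ : MLFormula P A} {w} : Skel ψ w → Skel (.and φ ψ) w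
  | box {a : A} {φ : MLFormula P A} {w} : Skel φ w → Skel (.box a φ) (a :: w)

lemma Skel.size_lb {φ : MLFormula P A} {w : List A} (h : Skel φ w) :
    w.length + 1 ≤ MLsz φ := by
  induction h with
  | atom p => simp [MLsz, MLSub]
  | @andL φ ψ w _ ih =>
      refine ih.trans ?_
      unfold MLsz
      refine Set.ncard_le_ncard ?_ (MLSub_finite _)
      exact fun x hx => Set.mem_insert_iff.2 (Or.inr (Or.inl hx))
  | @andR φ ψ w _ ih =>
      refine ih.trans ?_
      unfold MLsz
      refine Set.ncard_le_ncard ?_ (MLSub_finite _)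
      exact fun x hx => Set.mem_insert_iff.2 (Or.inr (Or.inr hx))
  | @box a φ w _ ih =>
      have hnm : (MLFormula.box a φ) ∉ MLSub φ := by
        intro hmem
        have := tsize_le_of_mem_MLSub hmem
        simp [tsize] at this
      have : MLsz (MLFormula.box a φ) = MLsz φ + 1 := by
        unfold MLsz
        show (insert (MLFormula.box a φ) (MLSub φ)).ncard = _
        rw [Set.ncard_insert_of_notMem hnm (MLSub_finite φ)]
      simp only [List.length_cons]
      omega

/-- No negation, no disjunction, diamonds only with threshold 1. -/
def Mon : MLFormula P A → Prop
  | .atom _ => True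
  | .not _ => False
  | .or _ _ => False
  | .and φ ψ => Mon φ ∧ Mon ψ
  | .dia _ k φ => k = 1 ∧ Mon φ
  | .box _ φ => Mon φ

/-- No negation, no conjunction, diamonds only with threshold 1. -/
def Mon' : MLFormula P A → Prop
  | .atom _ => True
  | .not _ => False
  | .or φ ψ => Mon' φ ∧ Mon' ψ
  | .and _ _ => False
  | .dia _ k φ => k = 1 ∧ Mon' φ
  | .box _ φ => Mon' φ

/-- No negation, diamonds only with threshold 1. -/
def NN : MLFormula P A → Prop
  | .atom _ => True
  | .not _ => False
  | .or φ ψ => NN φ ∧ NN ψ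
  | .and φ ψ => NN φ ∧ NN ψ
  | .dia _ k φ => k = 1 ∧ NN φ
  | .box _ φ => NN φ

lemma NN_of_Mon {φ : MLFormula P A} (h : Mon φ) : NN φ := by
  induction φ with
  | atom p => trivial
  | not φ ih => exact absurd h id
  | or φ₁ φ₂ ih₁ ih₂ => exact absurd h id
  | and φ₁ φ₂ ih₁ ih₂ => exact ⟨ih₁ h.1, ih₂ h.2⟩
  | dia a k φ ih => exact ⟨h.1, ih h.2⟩
  | box a φ ih => exact ih h

lemma NN_of_Mon' {φ : MLFormula P A} (h : Mon' φ) : NN φ := by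
  induction φ with
  | atom p => trivial
  | not φ ih => exact absurd h id
  | or φ₁ φ₂ ih₁ ih₂ => exact ⟨ih₁ h.1, ih₂ h.2⟩
  | and φ₁ φ₂ ih₁ ih₂ => exact absurd h id
  | dia a k φ ih => exact ⟨h.1, ih h.2⟩
  | box a φ ih => exact ih h

/-- The dual formula: swaps ∧/∨ and box/diamond. -/
def dualF : MLFormula P A → MLFormula P A
  | .atom p => .atom p
  | .not φ => .not (dualF φ)
  | .or φ ψ => .and (dualF φ) (dualF ψ)
  | .and φ ψ => .or (dualF φ) (dualF ψ)
  | .dia a _ φ => .box a (dualF φ)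
  | .box a φ => .dia a 1 (dualF φ)

lemma Mon_dualF {φ : MLFormula P A} (h : Mon' φ) : Mon (dualF φ) := by
  induction φ with
  | atom p => trivial
  | not φ ih => exact absurd h id
  | or φ₁ φ₂ ih₁ ih₂ => exact ⟨ih₁ h.1, ih₂ h.2⟩
  | and φ₁ φ₂ ih₁ ih₂ => exact absurd h id
  | dia a k φ ih => exact ih h.2
  | box a φ ih => exact ⟨rfl, ih h⟩

lemma dualF_dualF {φ : MLFormula P A} (h : NN φ) : dualF (dualF φ) = φ := by
  induction φ with
  | atom p => rfl
  | not φ ih => exact absurd h id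
  | or φ₁ φ₂ ih₁ ih₂ => simp [dualF, ih₁ h.1, ih₂ h.2]
  | and φ₁ φ₂ ih₁ ih₂ => simp [dualF, ih₁ h.1, ih₂ h.2]
  | dia a k φ ih => simp [dualF, ih h.2, h.1]
  | box a φ ih => simp [dualF, ih h]

/-- The dual Kripke structure: same transitions, complemented labelling. -/
def dualK (K : Kripke P A) : Kripke P A where
  Q := K.Q
  finQ := K.finQ
  neQ := K.neQ
  I := K.I
  neI := K.neI
  δ := K.δ
  π := fun q => {p | p ∉ K.π q}

lemma sat_dualK {K : Kripke P A} {φ : MLFormula P A} (h : NN φ) (q : K.Q) :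
    MLsat (dualK K) (dualF φ) q ↔ ¬ MLsat K φ q := by
  induction φ generalizing q with
  | atom p => simp [MLsat, dualF, dualK]
  | not φ ih => exact absurd h id
  | or φ₁ φ₂ ih₁ ih₂ =>
      simp only [dualF, MLsat]
      rw [ih₁ h.1, ih₂ h.2]
      tauto
  | and φ₁ φ₂ ih₁ ih₂ =>
      simp only [dualF, MLsat]
      rw [ih₁ h.1, ih₂ h.2]
      tauto
  | dia a k φ ih =>
      simp only [dualF, MLsat]
      obtain ⟨rfl, h2⟩ := h
      constructor
      · intro hall hcard
        have hne : (K.δ q a ∩ {q' | MLsat K φ q'}).Nonempty := by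
          rw [← Set.ncard_pos (Set.toFinite _)]
          exact Nat.lt_of_lt_of_le Nat.zero_lt_one (by simpa using hcard)
        obtain ⟨q', hq'⟩ := hne
        exact (ih h2 q').1 (hall q' hq'.1) hq'.2
      · intro hnot q' hq'
        rw [ih h2 q']
        intro hsat
        apply hnot
        have hne : (K.δ q a ∩ {q' | MLsat K φ q'}).Nonempty := ⟨q', hq', hsat⟩
        have := (Set.ncard_pos (Set.toFinite _)).2 hne
        simpa using Nat.one_le_iff_ne_zero.2 this.ne'
  | box a φ ih =>
      simp only [dualF, MLsat]
      constructor
      · intro hcard hall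
        have hne : ((dualK K).δ q a ∩ {q' | MLsat (dualK K) (dualF φ) q'}).Nonempty := by
          rw [← Set.ncard_pos (Set.toFinite _)]
          exact Nat.lt_of_lt_of_le Nat.zero_lt_one (by simpa using hcard)
        obtain ⟨q', hq'⟩ := hne
        exact (ih h q').1 hq'.2 (hall q' hq'.1)
      · intro hnot
        rw [Classical.not_forall] at hnot
        obtain ⟨q', hq'⟩ := hnot
        rw [Classical.not_imp] at hq'
        have hne : ((dualK K).δ q a ∩ {q'' | MLsat (dualK K) (dualF φ) q''}).Nonempty :=
          ⟨q', hq'.1, (ih h q').2 hq'.2⟩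
        have := (Set.ncard_pos (Set.toFinite _)).2 hne
        simpa using Nat.one_le_iff_ne_zero.2 this.ne'

lemma MLSub_dualF (φ : MLFormula P A) : MLSub (dualF φ) = dualF '' MLSub φ := by
  induction φ with
  | atom p => simp [MLSub, dualF]
  | not φ ih => simp [MLSub, dualF, ih, Set.image_insert_eq]
  | or φ₁ φ₂ ih₁ ih₂ =>
      show insert _ (MLSub (dualF φ₁) ∪ MLSub (dualF φ₂)) = _
      simp [MLSub, ih₁, ih₂, Set.image_insert_eq, Set.image_union, dualF]
  | and φ₁ φ₂ ih₁ ih₂ =>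
      show insert _ (MLSub (dualF φ₁) ∪ MLSub (dualF φ₂)) = _
      simp [MLSub, ih₁, ih₂, Set.image_insert_eq, Set.image_union, dualF]
  | dia a k φ ih =>
      show insert _ (MLSub (dualF φ)) = _
      simp [MLSub, ih, Set.image_insert_eq, dualF]
  | box a φ ih =>
      show insert _ (MLSub (dualF φ)) = _
      simp [MLSub, ih, Set.image_insert_eq, dualF]

lemma MLsz_dualF_le (φ : MLFormula P A) : MLsz (dualF φ) ≤ MLsz φ := by
  unfold MLsz
  rw [MLSub_dualF]
  exact Set.ncard_image_le (MLSub_finite φ)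

lemma MLsz_dualF {φ : MLFormula P A} (h : NN φ) : MLsz (dualF φ) = MLsz φ := by
  refine le_antisymm (MLsz_dualF_le φ) ?_
  have := MLsz_dualF_le (dualF φ)
  rwa [dualF_dualF h] at this

end Infra
/-! ### Reachability in Kripke structures -/

section Reach

variable {P A : Type}

/-- One-step successor set. -/
def stepSet (K : Kripke P A) (S : Set K.Q) (x : A) : Set K.Q := ⋃ q ∈ S, K.δ q x

/-- States reachable from `S` by complete runs over the word `w`. -/
def Reach (K : Kripke P A) (S : Set K.Q) : List A → Set K.Q
  | [] => S
  | x :: w => Reach K (stepSet K S x) w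

@[simp] lemma Reach_nil (K : Kripke P A) (S : Set K.Q) : Reach K S [] = S := rfl

@[simp] lemma Reach_cons (K : Kripke P A) (S : Set K.Q) (x : A) (w : List A) :
    Reach K S (x :: w) = Reach K (stepSet K S x) w := rfl

lemma stepSet_singleton (K : Kripke P A) (q : K.Q) (x : A) :
    stepSet K {q} x = K.δ q x := by simp [stepSet]

lemma stepSet_union (K : Kripke P A) (S T : Set K.Q) (x : A) :
    stepSet K (S ∪ T) x = stepSet K S x ∪ stepSet K T x := by
  unfold stepSet; exact Set.biUnion_union S T _

lemma stepSet_mono (K : Kripke P A) {S T : Set K.Q} (h : S ⊆ T) (x : A) :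
    stepSet K S x ⊆ stepSet K T x := by
  intro q hq
  simp only [stepSet, Set.mem_iUnion] at hq ⊢
  obtain ⟨r, hr, hq⟩ := hq
  exact ⟨r, h hr, hq⟩

lemma Reach_mono (K : Kripke P A) {S T : Set K.Q} (h : S ⊆ T) (w : List A) :
    Reach K S w ⊆ Reach K T w := by
  induction w generalizing S T with
  | nil => exact h
  | cons x w ih => exact ih (stepSet_mono K h x)

lemma Reach_union (K : Kripke P A) (S T : Set K.Q) (w : List A) :
    Reach K (S ∪ T) w = Reach K S w ∪ Reach K T w := by
  induction w generalizing S T with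
  | nil => rfl
  | cons x w ih => simp [stepSet_union, ih]

lemma Reach_append (K : Kripke P A) (S : Set K.Q) (u v : List A) :
    Reach K S (u ++ v) = Reach K (Reach K S u) v := by
  induction u generalizing S with
  | nil => rfl
  | cons x u ih => simp [ih]

lemma Reach_biUnion (K : Kripke P A) (S : Set K.Q) (w : List A) :
    Reach K S w = ⋃ q ∈ S, Reach K {q} w := by
  induction w generalizing S with
  | nil => simp
  | cons x w ih =>
      have h1 : Reach K S (x::w) = ⋃ q' ∈ stepSet K S x, Reach K {q'} w := by
        rw [Reach_cons, ih]
      have h2 : ∀ q, Reach K {q} (x::w) = ⋃ q' ∈ K.δ q x, Reach K {q'} w := by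
        intro q; rw [Reach_cons, stepSet_singleton, ih]
      rw [h1]
      ext r
      simp only [Set.mem_iUnion, h2]
      constructor
      · rintro ⟨q', hq', hr⟩
        simp only [stepSet, Set.mem_iUnion] at hq'
        obtain ⟨q, hq, hq'⟩ := hq'
        exact ⟨q, hq, q', hq', hr⟩
      · rintro ⟨q, hq, q', hq', hr⟩
        exact ⟨q', by simp only [stepSet, Set.mem_iUnion]; exact ⟨q, hq, hq'⟩, hr⟩

/-- Word of boxes. -/
def boxword (w : List A) : MLFormula Unit A := w.foldr (fun a ψ => .box a ψ) (.atom ())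

/-- Word of diamonds. -/
def diaword (w : List A) : MLFormula Unit A := w.foldr (fun a ψ => .dia a 1 ψ) (.atom ())

lemma dualF_boxword (w : List A) : dualF (boxword w) = diaword w := by
  induction w with
  | nil => rfl
  | cons x w ih =>
      show MLFormula.dia x 1 (dualF (boxword w)) = MLFormula.dia x 1 (diaword w)
      rw [ih]

lemma Mon_boxword (w : List A) : Mon (boxword w) := by
  induction w with
  | nil => trivial
  | cons x w ih => exact ih

lemma sat_boxword (K : Kripke Unit A) (w : List A) (q : K.Q) :
    MLsat K (boxword w) q ↔ ∀ q' ∈ Reach K {q} w, () ∈ K.π q' := by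
  induction w generalizing q with
  | nil => simp [boxword, MLsat, Reach]
  | cons x w ih =>
      show (∀ q' ∈ K.δ q x, MLsat K (boxword w) q') ↔ _
      rw [Reach_cons, stepSet_singleton, Reach_biUnion]
      simp only [Set.mem_iUnion]
      constructor
      · rintro h r ⟨q', hq', hr⟩
        exact (ih q').1 (h q' hq') r hr
      · intro h q' hq'
        rw [ih q']
        intro r hr
        exact h r ⟨q', hq', hr⟩

/-- Truth of a formula propagates along its box/and skeleton. -/
lemma Skel.truth {K : Kripke Unit A} {φ : MLFormula Unit A} {w : List A}
    (hs : Skel φ w) {q : K.Q} (h : MLsat K φ q) :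
    ∀ q' ∈ Reach K {q} w, () ∈ K.π q' := by
  induction hs generalizing q with
  | atom p => intro q' hq'; simp only [Reach_nil, Set.mem_singleton_iff] at hq'; subst hq'; exact h
  | andL _ ih => exact ih h.1
  | andR _ ih => exact ih h.2
  | @box a φ w _ ih =>
      intro q' hq'
      rw [Reach_cons, stepSet_singleton, Reach_biUnion] at hq'
      simp only [Set.mem_iUnion] at hq'
      obtain ⟨r, hr, hq'⟩ := hq'
      exact ih (h r hr) q' hq'
end Reach
/-! ### The negative structure and skeleton extraction -/

section NStruct

/-- States of the negative structure: a non-accepting loop state and a ⊤ state. -/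
inductive NSt : Type
  | n0 : NSt
  | t : NSt
deriving DecidableEq

instance : Fintype NSt :=
  ⟨{.n0, .t}, by intro x; cases x <;> simp⟩

lemma NSt_card : Fintype.card NSt = 2 := rfl

/-- The negative structure: `n0` (no `p`) branches to itself and to the
all-satisfying state `t`. -/
@[reducible] def NK : Kripke Unit (Fin 5) where
  Q := NSt
  neQ := ⟨.n0⟩
  I := {.n0}
  neI := ⟨.n0, rfl⟩
  δ := fun q _ => match q with | .n0 => {.n0, .t} | .t => {.t}
  π := fun q => match q with | .n0 => ∅ | .t => {()}

lemma NK_sat_top {φ : MLFormula Unit (Fin 5)} (h : Mon φ) : MLsat NK φ NSt.t := by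
  induction φ with
  | atom p => simp [MLsat, NK]
  | not φ ih => exact absurd h id
  | or φ₁ φ₂ ih₁ ih₂ => exact absurd h id
  | and φ₁ φ₂ ih₁ ih₂ => exact ⟨ih₁ h.1, ih₂ h.2⟩
  | dia a k φ ih =>
      obtain ⟨rfl, h2⟩ := h
      show ((1:ℕ+):ℕ) ≤ (NK.δ NSt.t a ∩ {q' | MLsat NK φ q'}).ncard
      have hne : (NK.δ NSt.t a ∩ {q' | MLsat NK φ q'}).Nonempty :=
        ⟨NSt.t, by show NSt.t ∈ ({NSt.t} : Set NSt); rfl, ih h2⟩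
      have := (Set.ncard_pos (Set.toFinite _)).2 hne
      simpa using Nat.one_le_iff_ne_zero.2 this.ne'
  | box a φ ih =>
      intro q' hq'
      have : q' = NSt.t := hq'
      subst this
      exact ih h

lemma NK_skel_extract {φ : MLFormula Unit (Fin 5)} (hm : Mon φ)
    (h : ¬ MLsat NK φ NSt.n0) : ∃ w, Skel φ w := by
  induction φ with
  | atom p => exact ⟨[], Skel.atom p⟩
  | not φ ih => exact absurd hm id
  | or φ₁ φ₂ ih₁ ih₂ => exact absurd hm id
  | and φ₁ φ₂ ih₁ ih₂ =>
      rw [show MLsat NK (φ₁.and φ₂) NSt.n0 = (MLsat NK φ₁ NSt.n0 ∧ MLsat NK φ₂ NSt.n0) from rfl,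
        not_and_or] at h
      rcases h with h | h
      · obtain ⟨w, hw⟩ := ih₁ hm.1 h
        exact ⟨w, hw.andL⟩
      · obtain ⟨w, hw⟩ := ih₂ hm.2 h
        exact ⟨w, hw.andR⟩
  | dia a k φ ih =>
      exfalso
      apply h
      obtain ⟨rfl, h2⟩ := hm
      show ((1:ℕ+):ℕ) ≤ (NK.δ NSt.n0 a ∩ {q' | MLsat NK φ q'}).ncard
      have hne : (NK.δ NSt.n0 a ∩ {q' | MLsat NK φ q'}).Nonempty :=
        ⟨NSt.t, by show NSt.t ∈ ({NSt.n0, NSt.t} : Set NSt); simp, NK_sat_top h2⟩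
      have := (Set.ncard_pos (Set.toFinite _)).2 hne
      simpa using Nat.one_le_iff_ne_zero.2 this.ne'
  | box a φ ih =>
      have h' : ¬ MLsat NK φ NSt.n0 := by
        intro hsat
        apply h
        intro q' hq'
        have : q' = NSt.n0 ∨ q' = NSt.t := hq'
        rcases this with rfl | rfl
        · exact hsat
        · exact NK_sat_top hm
      obtain ⟨w, hw⟩ := ih hm h'
      exact ⟨a :: w, hw.box⟩

lemma NK_n0_mem_Reach (w : List (Fin 5)) {S : Set NSt} (h : NSt.n0 ∈ S) :
    NSt.n0 ∈ Reach NK S w := by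
  induction w generalizing S with
  | nil => exact h
  | cons x w ih =>
      apply ih
      simp only [stepSet, Set.mem_iUnion]
      exact ⟨NSt.n0, h, by show NSt.n0 ∈ ({NSt.n0, NSt.t} : Set NSt); simp⟩

lemma NK_not_sat_boxword (w : List (Fin 5)) : ¬ MLsat NK (boxword w) NSt.n0 := by
  rw [sat_boxword]
  intro h
  have := h NSt.n0 (NK_n0_mem_Reach w rfl)
  simp [NK] at this

end NStruct

section FragLemmas

lemma Mem_boxword {F : MLFragment Unit (Fin 5)} (hatom : () ∈ F.atoms)
    (hbox : ∀ α : Fin 5, α ∈ F.boxes) (w : List (Fin 5)) : F.Mem (boxword w) := by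
  induction w with
  | nil => exact hatom
  | cons x w ih => exact ⟨hbox x, ih⟩

lemma Mem_diaword {F : MLFragment Unit (Fin 5)} (hatom : () ∈ F.atoms)
    (hdia : ∀ α : Fin 5, (α, (1:ℕ+)) ∈ F.dias) (w : List (Fin 5)) : F.Mem (diaword w) := by
  induction w with
  | nil => exact hatom
  | cons x w ih => exact ⟨hdia x, ih⟩

lemma Mem_Mon {F : MLFragment Unit (Fin 5)} (hnot : ¬ F.hasNot) (hor : ¬ F.hasOr)
    (hdia2 : ∀ (α : Fin 5) (k : ℕ+), 2 ≤ (k : ℕ) → (α, k) ∉ F.dias)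
    {φ : MLFormula Unit (Fin 5)} (h : F.Mem φ) : Mon φ := by
  induction φ with
  | atom p => trivial
  | not φ ih => exact absurd h.1 hnot
  | or φ₁ φ₂ ih₁ ih₂ => exact absurd h.1 hor
  | and φ₁ φ₂ ih₁ ih₂ => exact ⟨ih₁ h.2.1, ih₂ h.2.2⟩
  | dia a k φ ih =>
      refine ⟨?_, ih h.2⟩
      by_contra hk
      have h2 : 2 ≤ (k : ℕ) := by
        have h1 : 1 ≤ (k:ℕ) := k.one_le
        have h3 : (k:ℕ) ≠ 1 := fun hc => hk (PNat.coe_eq_one_iff.1 hc)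
        omega
      exact absurd h.1 (hdia2 a k h2)
  | box a φ ih => exact ih h.2

lemma Mem_Mon' {F : MLFragment Unit (Fin 5)} (hnot : ¬ F.hasNot) (hand : ¬ F.hasAnd)
    (hdia2 : ∀ (α : Fin 5) (k : ℕ+), 2 ≤ (k : ℕ) → (α, k) ∉ F.dias)
    {φ : MLFormula Unit (Fin 5)} (h : F.Mem φ) : Mon' φ := by
  induction φ with
  | atom p => trivial
  | not φ ih => exact absurd h.1 hnot
  | or φ₁ φ₂ ih₁ ih₂ => exact ⟨ih₁ h.2.1, ih₂ h.2.2⟩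
  | and φ₁ φ₂ ih₁ ih₂ => exact absurd h.1 hand
  | dia a k φ ih =>
      refine ⟨?_, ih h.2⟩
      by_contra hk
      have h2 : 2 ≤ (k : ℕ) := by
        have h1 : 1 ≤ (k:ℕ) := k.one_le
        have h3 : (k:ℕ) ≠ 1 := fun hc => hk (PNat.coe_eq_one_iff.1 hc)
        omega
      exact absurd h.1 (hdia2 a k h2)
  | box a φ ih => exact ih h.2

end FragLemmas
/-! ### The positive structure: a universal automaton forcing binary counting -/

section Auto

/-- States of the positive structure. -/
inductive St (m : ℕ) : Type
  | start : St m
  | sh : Fin (m+1) → St m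
  | shBad : St m
  | z : Fin (m+1) → St m
  | zGood : St m
  | zBad : St m
  | lP : Bool → St m
  | lS : Bool → St m
  | scan : St m
  | track : Bool → St m
  | skip : Bool → Fin (m+1) → St m
  | vio : St m
deriving DecidableEq, Fintype

variable {m : ℕ}

/-- Letter for a bit. -/
def bL (b : Bool) : Fin 5 := if b then 1 else 0

/-- Transitions (components other than `start`). -/
def stp0 (m : ℕ) : St m → Fin 5 → Set (St m)
  | .sh i, x => if h : (i:ℕ) < m then (if x = 0 ∨ x = 1 then {.sh ⟨(i:ℕ)+1, by omega⟩} else {.shBad})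
                else (if x = 2 then {.sh ⟨0, by omega⟩} else {.shBad})
  | .shBad, _ => {.shBad}
  | .z i, x => if h : (i:ℕ) < m then (if x = 0 then {.z ⟨(i:ℕ)+1, by omega⟩} else {.zBad})
               else (if x = 2 then {.zGood} else {.zBad})
  | .zGood, _ => {.zGood}
  | .zBad, _ => {.zBad}
  | .lP fl, x => if x = 2 then {.lS fl} else if x = 1 then {.lP fl} else {.lP false}
  | .lS _, x => if x = 2 then {.lS true} else if x = 1 then {.lP true} else {.lP false}
  | .scan, x => if x = 2 then {.scan, .track true} else {.scan}
  | .track c, x => if x = 0 then {.track false, .skip c ⟨m, by omega⟩}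
                   else if x = 1 then {.track c, .skip (!c) ⟨m, by omega⟩}
                   else ∅
  | .skip e j, x => if 1 ≤ (j:ℕ) then {.skip e ⟨(j:ℕ)-1, by omega⟩}
                    else (if x = bL e then ∅ else {.vio})
  | .vio, _ => {.vio}
  | .start, _ => ∅

/-- Full transition function. -/
def stp (m : ℕ) : St m → Fin 5 → Set (St m)
  | .start, x => stp0 m (.sh ⟨0, by omega⟩) x ∪ stp0 m (.z ⟨0, by omega⟩) x ∪
      stp0 m (.lS false) x ∪ stp0 m .scan x ∪ stp0 m (.track true) x
  | s, x => stp0 m s x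

/-- Labelling. -/
def lab (m : ℕ) : St m → Set Unit
  | .start => ∅
  | .sh i => if (i:ℕ) = 0 then {()} else ∅
  | .shBad => ∅
  | .z _ => ∅
  | .zGood => {()}
  | .zBad => ∅
  | .lP _ => ∅
  | .lS fl => if fl then {()} else ∅
  | .scan => {()}
  | .track _ => {()}
  | .skip _ _ => {()}
  | .vio => ∅

/-- The positive Kripke structure. -/
@[reducible] def Kp (m : ℕ) : Kripke Unit (Fin 5) where
  Q := St m
  neQ := ⟨.start⟩
  I := {.start}
  neI := ⟨.start, rfl⟩
  δ := stp m
  π := lab m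

/-- Encoding for the cardinality bound. -/
def encodeSt (m : ℕ) : St m → Fin 7 × Bool × Fin (m+1)
  | .sh i => (0, false, i)
  | .z i => (1, false, i)
  | .skip e j => (2, e, j)
  | .lP fl => (3, fl, ⟨0, by omega⟩)
  | .lS fl => (4, fl, ⟨0, by omega⟩)
  | .track c => (5, c, ⟨0, by omega⟩)
  | .scan => (6, false, ⟨0, by omega⟩)
  | .vio => (6, true, ⟨0, by omega⟩)
  | .shBad => (3, true, ⟨min 1 m, by omega⟩)
  | .zGood => (4, false, ⟨min 1 m, by omega⟩)
  | .zBad => (4, true, ⟨min 1 m, by omega⟩)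
  | .start => (5, false, ⟨min 1 m, by omega⟩)

lemma encodeSt_inj (hm : 1 ≤ m) : Function.Injective (encodeSt m) := by
  intro x y h
  cases x <;> cases y <;> simp only [encodeSt, Prod.mk.injEq, Fin.ext_iff] at h <;> simp_all <;> omega

lemma card_St_le (hm : 1 ≤ m) : Fintype.card (St m) ≤ 14 * (m + 1) := by
  have := Fintype.card_le_of_injective _ (encodeSt_inj hm)
  simp only [Fintype.card_prod, Fintype.card_fin, Fintype.card_bool] at this
  omega

lemma card_St_ge : m + 1 ≤ Fintype.card (St m) := by
  have : Function.Injective (St.sh (m := m)) := by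
    intro i j h
    injection h
  simpa using Fintype.card_le_of_injective _ this

end Auto
/-! ### Reach computations in the positive structure -/

section ReachA

variable {m : ℕ}

/-- The separator letter. -/
def sepL : Fin 5 := 2

/-- Bits of the number `u`, LSB first, as letters. -/
def blkbits (m u : ℕ) : List (Fin 5) := (List.range m).map (fun i => bL (u.testBit i))

/-- A block: the bits of `u` followed by a separator. -/
def blk (m u : ℕ) : List (Fin 5) := blkbits m u ++ [sepL]

@[simp] lemma blkbits_length : (blkbits m u).length = m := by simp [blkbits]

@[simp] lemma blk_length : (blk m u).length = m + 1 := by simp [blk, sepL]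

lemma blkbits_mem01 {x : Fin 5} (h : x ∈ blkbits m u) : x = 0 ∨ x = 1 := by
  simp only [blkbits, List.mem_map] at h
  obtain ⟨i, _, rfl⟩ := h
  cases (u.testBit i) <;> simp [bL]

/-- All-runs-accepting predicate. -/
def AA (m : ℕ) (S : Set (St m)) (w : List (Fin 5)) : Prop :=
  ∀ q ∈ Reach (Kp m) S w, () ∈ lab m q

lemma AA.mono {S T : Set (St m)} (h : S ⊆ T) {w} (hT : AA m T w) : AA m S w :=
  fun q hq => hT q (Reach_mono _ h w hq)

lemma AA_of_mem {S : Set (St m)} {q : St m} (h : q ∈ S) {w} (hT : AA m S w) :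
    AA m {q} w :=
  hT.mono (by simpa using h)

lemma AA_append {S : Set (St m)} {u v : List (Fin 5)} (h : AA m S (u ++ v)) :
    AA m (Reach (Kp m) S u) v := by
  intro q hq
  exact h q (by rwa [Reach_append])

@[simp] lemma stepSet_Kp (q : St m) (x : Fin 5) :
    stepSet (Kp m) {q} x = stp m q x := by
  rw [stepSet_singleton (Kp m) q x]

lemma Reach_empty (w : List (Fin 5)) : Reach (Kp m) ∅ w = ∅ := by
  induction w with
  | nil => rfl
  | cons x w ih => rw [Reach_cons, show stepSet (Kp m) ∅ x = ∅ by simp [stepSet], ih]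

/-- Absorbing states. -/
lemma Reach_vio (w : List (Fin 5)) : Reach (Kp m) {.vio} w = {.vio} := by
  induction w with
  | nil => rfl
  | cons x w ih => rw [Reach_cons, stepSet_Kp, show stp m .vio x = {.vio} from rfl, ih]

lemma Reach_shBad (w : List (Fin 5)) : Reach (Kp m) {.shBad} w = {.shBad} := by
  induction w with
  | nil => rfl
  | cons x w ih => rw [Reach_cons, stepSet_Kp, show stp m .shBad x = {.shBad} from rfl, ih]

lemma Reach_zBad (w : List (Fin 5)) : Reach (Kp m) {.zBad} w = {.zBad} := by
  induction w with
  | nil => rfl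
  | cons x w ih => rw [Reach_cons, stepSet_Kp, show stp m .zBad x = {.zBad} from rfl, ih]

lemma Reach_zGood (w : List (Fin 5)) : Reach (Kp m) {.zGood} w = {.zGood} := by
  induction w with
  | nil => rfl
  | cons x w ih => rw [Reach_cons, stepSet_Kp, show stp m .zGood x = {.zGood} from rfl, ih]

lemma sh_mk_eq {a b : ℕ} (ha : a < m+1) (hb : b < m+1) (h : a = b) :
    ({St.sh ⟨a, ha⟩} : Set (St m)) = {St.sh ⟨b, hb⟩} := by subst h; rfl

lemma z_mk_eq {a b : ℕ} (ha : a < m+1) (hb : b < m+1) (h : a = b) :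
    ({St.z ⟨a, ha⟩} : Set (St m)) = {St.z ⟨b, hb⟩} := by subst h; rfl

/-- Shape component on in-block letters. -/
lemma R_sh_bits : ∀ (l : List (Fin 5)) (i : ℕ) (hi : i + l.length ≤ m),
    (∀ x ∈ l, x = 0 ∨ x = 1) →
    Reach (Kp m) {.sh ⟨i, by omega⟩} l = {.sh ⟨i + l.length, by omega⟩}
  | [], i, hi, _ => rfl
  | x :: l, i, hi, h01 => by
      rw [Reach_cons, stepSet_Kp]
      have hx : x = 0 ∨ x = 1 := h01 x (by simp)
      have hilt : (i : ℕ) < m := by simp at hi; omega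
      have hstep : stp m (.sh ⟨i, by omega⟩) x = {.sh ⟨i + 1, by omega⟩} := by
        show stp0 m (.sh ⟨i, by omega⟩) x = _
        simp [stp0, hilt, hx]
      rw [hstep]
      rw [R_sh_bits l (i+1) (by simp at hi ⊢; omega) (fun y hy => h01 y (by simp [hy]))]
      exact sh_mk_eq _ _ (by simp only [List.length_cons]; omega)

/-- Shape component consumes a full block and returns to position 0. -/
lemma R_sh_blk (u : ℕ) :
    Reach (Kp m) {.sh ⟨0, by omega⟩} (blk m u) = {.sh ⟨0, by omega⟩} := by
  unfold blk
  rw [Reach_append]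
  rw [R_sh_bits (blkbits m u) 0 (by simp) (fun x hx => blkbits_mem01 hx)]
  show Reach (Kp m) _ [sepL] = _
  rw [show Reach (Kp m) {St.sh ⟨0 + (blkbits m u).length, by simp⟩} [sepL] =
      stepSet (Kp m) {St.sh ⟨0 + (blkbits m u).length, by simp⟩} sepL from rfl]
  rw [stepSet_Kp]
  show stp0 m (.sh ⟨0 + (blkbits m u).length, by simp⟩) sepL = _
  simp [stp0, sepL]

/-- First-block component reads `0^m 2` and accepts forever. -/
lemma R_z_zeros : ∀ (k i : ℕ) (hik : i + k ≤ m),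
    Reach (Kp m) {.z ⟨i, by omega⟩} (List.replicate k 0) = {.z ⟨i + k, by omega⟩}
  | 0, i, hik => rfl
  | (k+1), i, hik => by
      rw [List.replicate_succ, Reach_cons, stepSet_Kp]
      have hilt : i < m := by omega
      have hstep : stp m (.z ⟨i, by omega⟩) 0 = {.z ⟨i + 1, by omega⟩} := by
        show stp0 m (.z ⟨i, by omega⟩) 0 = _
        simp [stp0, hilt]
      rw [hstep, R_z_zeros k (i+1) (by omega)]
      exact z_mk_eq _ _ (by omega)

lemma blkbits_zero : blkbits m 0 = List.replicate m 0 := by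
  have h : ∀ x ∈ blkbits m 0, x = (0 : Fin 5) := by
    intro x hx
    simp only [blkbits, List.mem_map] at hx
    obtain ⟨i, _, rfl⟩ := hx
    simp [Nat.zero_testBit, bL]
  have := List.eq_replicate_of_mem h
  simpa using this

lemma R_z_blk0 (hm : 1 ≤ m) :
    Reach (Kp m) {.z ⟨0, by omega⟩} (blk m 0) = {.zGood} := by
  unfold blk
  rw [Reach_append, blkbits_zero, R_z_zeros m 0 (by omega)]
  show stepSet (Kp m) _ sepL = _
  rw [stepSet_Kp]
  show stp0 m (.z ⟨0 + m, by omega⟩) sepL = _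
  simp [stp0, sepL]

end ReachA
/-! ### Reach computations: last-block, scan, skip and track components -/

section ReachB

variable {m : ℕ}

lemma bL_ne_two (b : Bool) : bL b ≠ 2 := by cases b <;> simp [bL]

lemma bL_zero_or_one (b : Bool) : bL b = 0 ∨ bL b = 1 := by cases b <;> simp [bL]

lemma bL_eq_one_iff (b : Bool) : bL b = 1 ↔ b = true := by cases b <;> simp [bL]

lemma bL_eq_bL_iff (b e : Bool) : bL b = bL e ↔ b = e := by
  cases b <;> cases e <;> simp [bL]

lemma stp_lP (fl : Bool) (x : Fin 5) : stp m (.lP fl) x = stp0 m (.lP fl) x := rfl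

lemma skip_mk_eq {e : Bool} {a b : ℕ} (ha : a < m+1) (hb : b < m+1) (h : a = b) :
    ({St.skip e ⟨a, ha⟩} : Set (St m)) = {St.skip e ⟨b, hb⟩} := by subst h; rfl

/-- Last-block component on in-block letters, from `lP`. -/
lemma R_lP_bits : ∀ (l : List (Fin 5)), (∀ x ∈ l, x = 0 ∨ x = 1) → ∀ fl : Bool,
    Reach (Kp m) {.lP fl} l = {.lP (fl && l.all (fun y => decide (y = (1 : Fin 5))))}
  | [], _, fl => by simp
  | x :: l, h01, fl => by
      rw [Reach_cons, stepSet_Kp]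
      have hx : x = 0 ∨ x = 1 := h01 x (by simp)
      have hstep : stp m (.lP fl) x = {.lP (fl && decide (x = (1:Fin 5)))} := by
        show stp0 m (.lP fl) x = _
        rcases hx with rfl | rfl <;> simp [stp0]
      rw [hstep, R_lP_bits l (fun y hy => h01 y (by simp [hy])) _]
      congr 2
      simp [Bool.and_assoc]

/-- Last-block component on a nonempty in-block letter list, from `lS`. -/
lemma R_lS_bits : ∀ (l : List (Fin 5)), l ≠ [] → (∀ x ∈ l, x = 0 ∨ x = 1) → ∀ fl : Bool,
    Reach (Kp m) {.lS fl} l = {.lP (l.all (fun y => decide (y = (1 : Fin 5))))}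
  | [], hne, _, fl => absurd rfl hne
  | x :: l, _, h01, fl => by
      rw [Reach_cons, stepSet_Kp]
      have hx : x = 0 ∨ x = 1 := h01 x (by simp)
      have hstep : stp m (.lS fl) x = {.lP (decide (x = (1:Fin 5)))} := by
        show stp0 m (.lS fl) x = _
        rcases hx with rfl | rfl <;> simp [stp0]
      rw [hstep, R_lP_bits l (fun y hy => h01 y (by simp [hy])) _]
      simp [List.all_cons]

lemma R_lS_blk (hm : 1 ≤ m) (u : ℕ) (fl : Bool) :
    Reach (Kp m) {.lS fl} (blk m u) =
      {.lS ((blkbits m u).all (fun y => decide (y = (1 : Fin 5))))} := by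
  unfold blk
  rw [Reach_append]
  have hne : blkbits m u ≠ [] := by
    intro h
    have := blkbits_length (m := m) (u := u)
    rw [h] at this
    simp at this
    omega
  rw [R_lS_bits (blkbits m u) hne (fun x hx => blkbits_mem01 hx) fl]
  show stepSet (Kp m) _ sepL = _
  rw [stepSet_Kp, stp_lP]
  simp [stp0, sepL]

/-- Scan component loops on in-block letters. -/
lemma R_scan_bits : ∀ (l : List (Fin 5)), (∀ x ∈ l, x = 0 ∨ x = 1) →
    Reach (Kp m) {.scan} l = {.scan}
  | [], _ => rfl
  | x :: l, h01 => by
      rw [Reach_cons, stepSet_Kp]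
      have hx : x = 0 ∨ x = 1 := h01 x (by simp)
      have hstep : stp m .scan x = {.scan} := by
        show stp0 m .scan x = _
        rcases hx with rfl | rfl <;> simp [stp0]
      rw [hstep, R_scan_bits l (fun y hy => h01 y (by simp [hy]))]

lemma R_scan_blk (u : ℕ) :
    Reach (Kp m) {.scan} (blk m u) = {.scan, .track true} := by
  unfold blk
  rw [Reach_append, R_scan_bits (blkbits m u) (fun x hx => blkbits_mem01 hx)]
  show stepSet (Kp m) _ sepL = _
  rw [stepSet_Kp]
  show stp0 m .scan sepL = _
  simp [stp0, sepL]

/-- Skip component counts down. -/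
lemma R_skip_count : ∀ (l : List (Fin 5)) (e : Bool) (j : ℕ) (hj : j ≤ m),
    l.length ≤ j →
    Reach (Kp m) {.skip e ⟨j, by omega⟩} l = {.skip e ⟨j - l.length, by omega⟩}
  | [], e, j, hj, _ => rfl
  | x :: l, e, j, hj, hlen => by
      rw [Reach_cons, stepSet_Kp]
      have hj1 : 1 ≤ j := by simp at hlen; omega
      have hstep : stp m (.skip e ⟨j, by omega⟩) x = {.skip e ⟨j - 1, by omega⟩} := by
        show stp0 m (.skip e ⟨j, by omega⟩) x = _
        simp [stp0, hj1]
      rw [hstep, R_skip_count l e (j-1) (by omega) (by simp at hlen; omega)]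
      exact skip_mk_eq _ _ (by simp only [List.length_cons]; omega)

/-- Skip component compares the letter at position `i`. -/
lemma R_skip_hit : ∀ (l : List (Fin 5)) (e : Bool) (i : ℕ) (hi : i ≤ m),
    i < l.length →
    Reach (Kp m) {.skip e ⟨i, by omega⟩} l = (if l[i]! = bL e then ∅ else {.vio})
  | [], _, i, _, hlt => by simp at hlt
  | x :: l, e, 0, hi, hlt => by
      rw [Reach_cons, stepSet_Kp]
      have hstep : stp m (.skip e ⟨0, by omega⟩) x =
          (if x = bL e then ∅ else {.vio}) := by
        show stp0 m (.skip e ⟨0, by omega⟩) x = _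
        simp [stp0]
      rw [hstep]
      by_cases hx : x = bL e
      · rw [if_pos hx, Reach_empty, if_pos (by simpa using hx)]
      · rw [if_neg hx, Reach_vio, if_neg (by simpa using hx)]
  | x :: l, e, (i+1), hi, hlt => by
      rw [Reach_cons, stepSet_Kp]
      have hstep : stp m (.skip e ⟨i+1, by omega⟩) x = {.skip e ⟨i, by omega⟩} := by
        show stp0 m (.skip e ⟨i+1, by omega⟩) x = _
        simp [stp0]
      rw [hstep, R_skip_hit l e i (by omega) (by simp at hlt; omega)]
      congr 1

end ReachB
/-! ### Binary increment arithmetic -/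

section Arith

/-- Bit `i` of `u+1` equals bit `i` of `u` xor the carry from the lower bits. -/
lemma testBit_succ_eq (i : ℕ) : ∀ u : ℕ,
    Nat.testBit (u+1) i = xor (u.testBit i) (decide (∀ l < i, u.testBit l = true)) := by
  induction i with
  | zero =>
      intro u
      rcases Nat.mod_two_eq_zero_or_one u with h | h
      · have h1 : (u+1) % 2 = 1 := by omega
        simp [Nat.testBit_zero, h, h1]
      · have h1 : (u+1) % 2 = 0 := by omega
        simp [Nat.testBit_zero, h, h1]
  | succ i ih =>
      intro u
      rcases Nat.mod_two_eq_zero_or_one u with h | h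
      · have hdiv : (u+1)/2 = u/2 := by omega
        have hb0 : u.testBit 0 = false := by simp [Nat.testBit_zero, h]
        have hdec : decide (∀ l < i + 1, u.testBit l = true) = false := by
          simp only [decide_eq_false_iff_not]
          intro hall
          have := hall 0 (by omega)
          rw [hb0] at this
          exact Bool.false_ne_true this
        rw [Nat.testBit_add_one, hdiv, ← Nat.testBit_add_one, hdec, Bool.xor_false]
      · have hdiv : (u+1)/2 = u/2 + 1 := by omega
        have hb0 : u.testBit 0 = true := by simp [Nat.testBit_zero, h]
        have hdec : decide (∀ l < i + 1, u.testBit l = true) =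
            decide (∀ l < i, (u/2).testBit l = true) := by
          rw [decide_eq_decide]
          constructor
          · intro hall l hl
            rw [← Nat.testBit_add_one]
            exact hall (l+1) (by omega)
          · intro hall l hl
            match l with
            | 0 => exact hb0
            | (l'+1) =>
                rw [Nat.testBit_add_one]
                exact hall l' (by omega)
        rw [Nat.testBit_add_one, hdiv, ih (u/2), Nat.testBit_add_one, hdec]

/-- A number below `2^m` with all low `m` bits set equals `2^m - 1`. -/
lemma allOnes_iff {m u : ℕ} (hu : u < 2^m) :
    (decide (∀ i < m, u.testBit i = true)) = decide (u = 2^m - 1) := by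
  rw [decide_eq_decide]
  constructor
  · intro hall
    refine Nat.eq_of_testBit_eq fun i => ?_
    rw [Nat.testBit_two_pow_sub_one]
    by_cases hi : i < m
    · simp [hall i hi, hi]
    · have h1 : u.testBit i = false :=
        Nat.testBit_eq_false_of_lt (lt_of_lt_of_le hu (Nat.pow_le_pow_right (by omega) (by omega)))
      simp [h1, hi]
  · rintro rfl i hi
    simp [Nat.testBit_two_pow_sub_one, hi]

end Arith
/-! ### The track component -/

section Track

variable {m : ℕ}

lemma stp_track_bit (c b : Bool) :
    stp m (.track c) (bL b) =
      {.track (c && b), .skip (xor b c) ⟨m, by omega⟩} := by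
  show stp0 m (.track c) (bL b) = _
  cases b <;> cases c <;> simp [stp0, bL]

lemma carry_vacuous (i u : ℕ) :
    decide (∀ l', i ≤ l' → l' < i → u.testBit l' = true) = true := by
  simp only [decide_eq_true_eq]
  intro l' h1 h2
  omega

lemma carry_split {i l : ℕ} (h : i < l) (c : Bool) (u : ℕ) :
    ((c && u.testBit i) && decide (∀ l', i+1 ≤ l' → l' < l → u.testBit l' = true))
      = (c && decide (∀ l', i ≤ l' → l' < l → u.testBit l' = true)) := by
  cases hb : u.testBit i with
  | false =>
      have hnot : ¬ (∀ l', i ≤ l' → l' < l → u.testBit l' = true) := by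
        intro hall
        have := hall i le_rfl h
        rw [hb] at this
        exact Bool.false_ne_true this
      simp [hnot]
  | true =>
      have : decide (∀ l', i+1 ≤ l' → l' < l → u.testBit l' = true)
          = decide (∀ l', i ≤ l' → l' < l → u.testBit l' = true) := by
        rw [decide_eq_decide]
        constructor
        · intro hall l' h1 h2
          rcases Nat.eq_or_lt_of_le h1 with rfl | h1'
          · exact hb
          · exact hall l' h1' h2
        · intro hall l' h1 h2
          exact hall l' (by omega) h2
      rw [Bool.and_assoc]
      rw [this]; simp

lemma R_track_suffix : ∀ (k i : ℕ) (hik : i + k = m) (c : Bool) (u : ℕ),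
    Reach (Kp m) {.track c} (((List.range' i k).map (fun l => bL (u.testBit l))) ++ [sepL]) =
      {q | ∃ l, i ≤ l ∧ ∃ hl : l < m, q = .skip (xor (u.testBit l)
        (c && decide (∀ l', i ≤ l' → l' < l → u.testBit l' = true))) ⟨l, by omega⟩}
  | 0, i, hik, c, u => by
      simp only [List.range'_zero, List.map_nil, List.nil_append]
      have h1 : Reach (Kp m) {.track c} [sepL] = stp m (.track c) sepL := by
        rw [show Reach (Kp m) {St.track c} [sepL]
            = stepSet (Kp m) {St.track c} sepL from rfl, stepSet_Kp]
      rw [h1, show stp m (.track c) sepL = ∅ by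
        show stp0 m (.track c) sepL = ∅; simp [stp0, sepL]]
      ext q
      simp only [Set.mem_empty_iff_false, Set.mem_setOf_eq, false_iff]
      rintro ⟨l, h1, h2, _⟩
      omega
  | (k+1), i, hik, c, u => by
      rw [List.range'_succ]
      simp only [List.map_cons, List.cons_append]
      rw [Reach_cons, stepSet_Kp, stp_track_bit c (u.testBit i)]
      rw [show ({.track (c && u.testBit i), .skip (xor (u.testBit i) c) ⟨m, by omega⟩}
            : Set (St m))
          = {.track (c && u.testBit i)} ∪ {.skip (xor (u.testBit i) c) ⟨m, by omega⟩} by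
        rw [Set.insert_eq]]
      rw [Reach_union]
      have hlen : ((List.range' (i+1) k).map (fun l => bL (u.testBit l)) ++ [sepL]).length
          = k + 1 := by simp
      have hskip : Reach (Kp m) {.skip (xor (u.testBit i) c) ⟨m, by omega⟩}
          ((List.range' (i+1) k).map (fun l => bL (u.testBit l)) ++ [sepL])
          = {.skip (xor (u.testBit i) c) ⟨i, by omega⟩} := by
        rw [R_skip_count _ _ m le_rfl (by rw [hlen]; omega)]
        exact skip_mk_eq _ _ (by rw [hlen]; omega)
      rw [hskip, R_track_suffix k (i+1) (by omega) (c && u.testBit i) u]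
      ext q
      simp only [Set.mem_union, Set.mem_singleton_iff, Set.mem_setOf_eq]
      constructor
      · rintro (⟨l, hl1, hl2, rfl⟩ | rfl)
        · exact ⟨l, by omega, hl2, by rw [← carry_split (show i < l by omega) c u]⟩
        · refine ⟨i, le_rfl, by omega, ?_⟩
          rw [carry_vacuous i u, Bool.and_true]
      · rintro ⟨l, hl1, hlm, rfl⟩
        by_cases hil : l = i
        · subst hil
          right
          rw [carry_vacuous l u, Bool.and_true]
        · left
          exact ⟨l, by omega, hlm, by rw [← carry_split (show i < l by omega) c u]⟩

/-- Track component over a full block: spawns exactly the expected-bit skips. -/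
lemma R_track_blk (u : ℕ) :
    Reach (Kp m) {.track true} (blk m u) =
      {q | ∃ l, ∃ hl : l < m, q = .skip ((u+1).testBit l) ⟨l, by omega⟩} := by
  have h : blk m u = ((List.range' 0 m).map (fun l => bL (u.testBit l))) ++ [sepL] := by
    unfold blk blkbits
    rw [List.range_eq_range']
  rw [h, R_track_suffix m 0 (by omega) true u]
  ext q
  simp only [Set.mem_setOf_eq]
  constructor
  · rintro ⟨l, _, hl, rfl⟩
    refine ⟨l, hl, ?_⟩
    congr 1
    rw [testBit_succ_eq]
    congr 1
    rw [Bool.true_and]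
    rw [decide_eq_decide]
    exact ⟨fun h l' hl' => h l' (by omega) hl', fun h l' _ hl' => h l' hl'⟩
  · rintro ⟨l, hl, rfl⟩
    refine ⟨l, by omega, hl, ?_⟩
    congr 1
    rw [testBit_succ_eq]
    congr 1
    rw [Bool.true_and]
    rw [decide_eq_decide]
    exact ⟨fun h l' _ hl' => h l' hl', fun h l' hl' => h l' (by omega) hl'⟩

end Track
/-! ### Block-boundary configurations -/

section Cfg

variable {m : ℕ}

/-- The pending-skip states at a block boundary after reading value `v`. -/
def skipsC (m v : ℕ) : Set (St m) :=
  {q | ∃ l, ∃ _ : l < m, q = .skip ((v+1).testBit l) ⟨l, by omega⟩}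

/-- The configuration at a block boundary, the last read block holding value `v`. -/
def Cfg (m v : ℕ) : Set (St m) :=
  {.sh ⟨0, by omega⟩} ∪ ({.zGood} ∪ ({.lS (decide (v = 2^m - 1))} ∪
    ({.scan} ∪ ({.track true} ∪ skipsC m v))))

lemma blkbits_all1 (u : ℕ) :
    (blkbits m u).all (fun y => decide (y = (1:Fin 5))) =
      decide (∀ i < m, u.testBit i = true) := by
  rw [Bool.eq_iff_iff]
  simp only [List.all_eq_true, decide_eq_true_eq, blkbits, List.mem_map, List.mem_range]
  constructor
  · intro h i hi
    have := h (bL (u.testBit i)) ⟨i, hi, rfl⟩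
    rwa [bL_eq_one_iff] at this
  · rintro h x ⟨i, hi, rfl⟩
    rw [bL_eq_one_iff]
    exact h i hi

lemma blk_getElem_bit (u l : ℕ) (hl : l < m) : (blk m u)[l]! = bL (u.testBit l) := by
  have hlen : l < (blk m u).length := by rw [blk_length]; omega
  rw [getElem!_pos (blk m u) l hlen]
  simp only [blk, blkbits]
  rw [List.getElem_append_left (by simpa using hl)]
  simp

lemma blk_getElem_sep (u : ℕ) : (blk m u)[m]! = sepL := by
  have hlen : m < (blk m u).length := by simp
  rw [getElem!_pos (blk m u) m hlen]
  simp only [blk]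
  rw [List.getElem_append_right (by simp)]
  simp

/-- One full block from a boundary configuration. -/
lemma Reach_Cfg_blk (hm : 1 ≤ m) {v : ℕ} (hv : v + 1 < 2^m) :
    Reach (Kp m) (Cfg m v) (blk m (v+1)) = Cfg m (v+1) := by
  have hskips : Reach (Kp m) (skipsC m v) (blk m (v+1)) = ∅ := by
    rw [Reach_biUnion]
    ext q
    simp only [Set.mem_iUnion, Set.mem_empty_iff_false, iff_false]
    rintro ⟨q', hq', hq⟩
    obtain ⟨l, hl, rfl⟩ := hq'
    rw [R_skip_hit _ _ l (by omega) (by rw [blk_length]; omega)] at hq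
    rw [blk_getElem_bit (v+1) l hl, if_pos rfl] at hq
    exact hq
  unfold Cfg
  rw [Reach_union, Reach_union, Reach_union, Reach_union, Reach_union]
  rw [R_sh_blk, Reach_zGood, R_lS_blk hm, R_scan_blk, R_track_blk, hskips]
  rw [blkbits_all1, allOnes_iff hv]
  ext q
  simp only [Set.mem_union, Set.mem_singleton_iff, Set.mem_insert_iff, Set.union_empty,
    skipsC, Set.mem_setOf_eq]
  tauto

/-- The five component-initial states. -/
def I5 (m : ℕ) : Set (St m) :=
  {.sh ⟨0, by omega⟩} ∪ ({.z ⟨0, by omega⟩} ∪ ({.lS false} ∪ ({.scan} ∪ {.track true})))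

lemma stp_start (x : Fin 5) :
    stp m .start x = stepSet (Kp m) (I5 m) x := by
  have h : stepSet (Kp m) (I5 m) x = stp0 m (.sh ⟨0, by omega⟩) x ∪
      (stp0 m (.z ⟨0, by omega⟩) x ∪ (stp0 m (.lS false) x ∪
      (stp0 m .scan x ∪ stp0 m (.track true) x))) := by
    unfold I5
    rw [stepSet_union, stepSet_union, stepSet_union, stepSet_union,
      stepSet_Kp, stepSet_Kp, stepSet_Kp, stepSet_Kp, stepSet_Kp]
    rfl
  rw [h]
  show stp0 m (.sh ⟨0, by omega⟩) x ∪ stp0 m (.z ⟨0, by omega⟩) x ∪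
      stp0 m (.lS false) x ∪ stp0 m .scan x ∪ stp0 m (.track true) x = _
  rw [Set.union_assoc, Set.union_assoc, Set.union_assoc]

lemma Reach_start_cons (x : Fin 5) (w : List (Fin 5)) :
    Reach (Kp m) {.start} (x :: w) = Reach (Kp m) (I5 m) (x :: w) := by
  rw [Reach_cons, Reach_cons, stepSet_Kp, stp_start]

/-- The first block from the initial configuration. -/
lemma Reach_I5_blk0 (hm : 1 ≤ m) :
    Reach (Kp m) (I5 m) (blk m 0) = Cfg m 0 := by
  unfold I5
  rw [Reach_union, Reach_union, Reach_union, Reach_union]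
  rw [R_sh_blk, R_z_blk0 hm, R_lS_blk hm, R_scan_blk, R_track_blk]
  rw [blkbits_all1]
  have h1 : decide (∀ i < m, Nat.testBit 0 i = true) = false := by
    simp only [decide_eq_false_iff_not]
    intro hall
    have := hall 0 (by omega)
    rw [Nat.zero_testBit] at this
    exact Bool.false_ne_true this
  have h2 : decide ((0:ℕ) = 2^m - 1) = false := by
    simp only [decide_eq_false_iff_not]
    have : 2 ≤ 2^m := by
      calc 2 = 2^1 := rfl
      _ ≤ 2^m := Nat.pow_le_pow_right (by omega) hm
    omega
  rw [h1]
  unfold Cfg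
  rw [h2]
  ext q
  simp only [Set.mem_union, Set.mem_singleton_iff, Set.mem_insert_iff,
    skipsC, Set.mem_setOf_eq]
  tauto

end Cfg
/-! ### Extraction lemmas and the master induction -/

section Master

variable {m : ℕ}

lemma AA_step {q : St m} {S : Set (St m)} {x : Fin 5} {w : List (Fin 5)}
    (hstep : stp m q x = S) (h : AA m {q} (x :: w)) : AA m S w := by
  intro r hr
  exact h r (by rw [Reach_cons, stepSet_Kp, hstep]; exact hr)

lemma not_AA_shBad (w : List (Fin 5)) : ¬ AA m {.shBad} w := by
  intro h
  have := h .shBad (by rw [show Reach (Kp m) {St.shBad} w = {St.shBad} from Reach_shBad w]; rfl)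
  simp [lab] at this

lemma not_AA_zBad (w : List (Fin 5)) : ¬ AA m {.zBad} w := by
  intro h
  have := h .zBad (by rw [show Reach (Kp m) {St.zBad} w = {St.zBad} from Reach_zBad w]; rfl)
  simp [lab] at this

lemma not_AA_vio (w : List (Fin 5)) : ¬ AA m {.vio} w := by
  intro h
  have := h .vio (by rw [show Reach (Kp m) {St.vio} w = {St.vio} from Reach_vio w]; rfl)
  simp [lab] at this

/-- Skip states force the letter at their target position. -/
lemma AA_skip_extract : ∀ (w : List (Fin 5)) (e : Bool) (i : ℕ) (hi : i ≤ m),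
    AA m {.skip e ⟨i, by omega⟩} w → i < w.length → w[i]! = bL e
  | [], e, i, hi, h, hlen => by simp at hlen
  | x :: w, e, 0, hi, h, hlen => by
      rw [List.getElem!_cons_zero]
      by_contra hx
      have hstep : stp m (.skip e ⟨0, by omega⟩) x = {.vio} := by
        show stp0 m (.skip e ⟨0, by omega⟩) x = _
        simp [stp0, hx]
      exact not_AA_vio w (AA_step hstep h)
  | x :: w, e, (i+1), hi, h, hlen => by
      rw [List.getElem!_cons_succ]
      have hstep : stp m (.skip e ⟨i+1, by omega⟩) x = {.skip e ⟨i, by omega⟩} := by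
        show stp0 m (.skip e ⟨i+1, by omega⟩) x = _
        simp [stp0]
      exact AA_skip_extract w e i (by omega) (AA_step hstep h) (by simp at hlen; omega)

/-- The shape component forces separators and block lengths. -/
lemma AA_sh_extract : ∀ (j i : ℕ) (hij : i + j = m + 1) (hj : 1 ≤ j) (w : List (Fin 5)),
    AA m {.sh ⟨i, by omega⟩} w → w ≠ [] →
    j ≤ w.length ∧ (∀ l, l < j → i + l = m → w[l]! = sepL) ∧
      AA m {.sh ⟨0, by omega⟩} (w.drop j)
  | j, i, hij, hj, [], _, hne => absurd rfl hne
  | (j+1), i, hij, _, (x :: w), h, _ => by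
      by_cases him : i = m
      · have hj0 : j = 0 := by omega
        subst hj0
        by_cases hx : x = sepL
        · subst hx
          have hstep : stp m (.sh ⟨i, by omega⟩) sepL = {.sh ⟨0, by omega⟩} := by
            show stp0 m (.sh ⟨i, by omega⟩) sepL = _
            simp [stp0, him, sepL]
          have h2 := AA_step hstep h
          refine ⟨by simp, ?_, by simpa using h2⟩
          intro l hl _
          have : l = 0 := by omega
          subst this
          simp
        · exfalso
          have hstep : stp m (.sh ⟨i, by omega⟩) x = {.shBad} := by
            show stp0 m (.sh ⟨i, by omega⟩) x = _
            have hx2 : ¬ (x = 2) := by simpa [sepL] using hx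
            simp [stp0, him, hx2]
          exact not_AA_shBad w (AA_step hstep h)
      · have hilt : i < m := by omega
        by_cases hx : x = 0 ∨ x = 1
        · have hstep : stp m (.sh ⟨i, by omega⟩) x = {.sh ⟨i+1, by omega⟩} := by
            show stp0 m (.sh ⟨i, by omega⟩) x = _
            simp [stp0, hilt, hx]
          have h2 := AA_step hstep h
          have hwne : w ≠ [] := by
            rintro rfl
            have := h2 (.sh ⟨i+1, by omega⟩) rfl
            simp [lab] at this
          have hrec := AA_sh_extract j (i+1) (by omega) (by omega) w h2 hwne
          obtain ⟨hlen, hsep, hdrop⟩ := hrec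
          refine ⟨by simp; omega, ?_, by simpa using hdrop⟩
          intro l hl hil
          match l with
          | 0 => omega
          | (l'+1) =>
              rw [List.getElem!_cons_succ]
              exact hsep l' (by omega) (by omega)
        · exfalso
          have hstep : stp m (.sh ⟨i, by omega⟩) x = {.shBad} := by
            show stp0 m (.sh ⟨i, by omega⟩) x = _
            simp [stp0, hilt, hx]
          exact not_AA_shBad w (AA_step hstep h)

/-- The first-block component forces the first block to be `0^m 2`. -/
lemma AA_z_extract : ∀ (j i : ℕ) (hij : i + j = m + 1) (hj : 1 ≤ j) (w : List (Fin 5)),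
    AA m {.z ⟨i, by omega⟩} w →
    j ≤ w.length ∧ (∀ l, l < j → ((i + l < m → w[l]! = (0 : Fin 5)) ∧
      (i + l = m → w[l]! = sepL))) ∧ AA m {.zGood} (w.drop j)
  | j, i, hij, hj, [], h => by
      exfalso
      have := h (.z ⟨i, by omega⟩) rfl
      simp [lab] at this
  | (j+1), i, hij, _, (x :: w), h => by
      by_cases him : i = m
      · have hj0 : j = 0 := by omega
        subst hj0
        by_cases hx : x = sepL
        · subst hx
          have hstep : stp m (.z ⟨i, by omega⟩) sepL = {.zGood} := by
            show stp0 m (.z ⟨i, by omega⟩) sepL = _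
            simp [stp0, him, sepL]
          have h2 := AA_step hstep h
          refine ⟨by simp, ?_, by simpa using h2⟩
          intro l hl
          have : l = 0 := by omega
          subst this
          exact ⟨fun hc => by omega, fun _ => by simp⟩
        · exfalso
          have hstep : stp m (.z ⟨i, by omega⟩) x = {.zBad} := by
            show stp0 m (.z ⟨i, by omega⟩) x = _
            have hx2 : ¬ (x = 2) := by simpa [sepL] using hx
            simp [stp0, him, hx2]
          exact not_AA_zBad w (AA_step hstep h)
      · have hilt : i < m := by omega
        by_cases hx : x = 0
        · subst hx
          have hstep : stp m (.z ⟨i, by omega⟩) 0 = {.z ⟨i+1, by omega⟩} := by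
            show stp0 m (.z ⟨i, by omega⟩) 0 = _
            simp [stp0, hilt]
          have h2 := AA_step hstep h
          have hrec := AA_z_extract j (i+1) (by omega) (by omega) w h2
          obtain ⟨hlen, hbit, hdrop⟩ := hrec
          refine ⟨by simp; omega, ?_, by simpa using hdrop⟩
          intro l hl
          match l with
          | 0 => exact ⟨fun _ => by simp, fun hc => by omega⟩
          | (l'+1) =>
              rw [List.getElem!_cons_succ]
              exact ⟨fun hc => (hbit l' (by omega)).1 (by omega),
                fun hc => (hbit l' (by omega)).2 (by omega)⟩
        · exfalso
          have hstep : stp m (.z ⟨i, by omega⟩) x = {.zBad} := by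
            show stp0 m (.z ⟨i, by omega⟩) x = _
            simp [stp0, hilt, hx]
          exact not_AA_zBad w (AA_step hstep h)

end Master
/-! ### The master induction: counting is forced -/

section Master2

variable {m : ℕ}

lemma sh0_mem_Cfg (v : ℕ) : (.sh ⟨0, by omega⟩ : St m) ∈ Cfg m v := by
  unfold Cfg; left; rfl

lemma skip_mem_Cfg {v l : ℕ} (hl : l < m) :
    (.skip ((v+1).testBit l) ⟨l, by omega⟩ : St m) ∈ Cfg m v := by
  unfold Cfg skipsC
  right; right; right; right; right
  exact ⟨l, hl, rfl⟩

lemma take_eq_blk {v : ℕ} (w : List (Fin 5)) (hlen : m + 1 ≤ w.length)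
    (hsep : w[m]! = sepL) (hbits : ∀ l, l < m → w[l]! = bL ((v+1).testBit l)) :
    w.take (m+1) = blk m (v+1) := by
  apply List.ext_getElem
  · rw [List.length_take, blk_length]; omega
  · intro l h1 h2
    have hlm : l < m + 1 := by rw [blk_length] at h2; omega
    have hlw : l < w.length := by omega
    rw [List.getElem_take]
    rw [← getElem!_pos w l hlw, ← getElem!_pos (blk m (v+1)) l h2]
    rcases Nat.lt_or_ge l m with hcase | hcase
    · rw [hbits l hcase, blk_getElem_bit (v+1) l hcase]
    · have : l = m := by omega
      subst this
      rw [hsep, blk_getElem_sep]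

lemma master_lb (hm : 1 ≤ m) : ∀ (d v : ℕ), v + d = 2^m - 1 → ∀ (w : List (Fin 5)),
    AA m (Cfg m v) w → d * (m+1) ≤ w.length
  | 0, v, hdv, w, h => by omega
  | (d+1), v, hdv, w, h => by
      have hpow : 1 ≤ 2^m := Nat.one_le_two_pow
      have hvne : v ≠ 2^m - 1 := by omega
      have hlSmem : (.lS false : St m) ∈ Cfg m v := by
        have hd : decide (v = 2^m - 1) = false := decide_eq_false hvne
        unfold Cfg
        rw [hd]
        right; right; left; rfl
      have hne : w ≠ [] := by
        rintro rfl
        have h0 := AA_of_mem hlSmem h (.lS false) rfl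
        simp [lab] at h0
      have hsh := AA_sh_extract (m+1) 0 (by omega) (by omega) w
        (AA_of_mem (sh0_mem_Cfg v) h) hne
      obtain ⟨hlen, hsep, _⟩ := hsh
      have hbits : ∀ l, l < m → w[l]! = bL ((v+1).testBit l) := by
        intro l hl
        exact AA_skip_extract w _ l (by omega)
          (AA_of_mem (skip_mem_Cfg hl) h) (by omega)
      have htake := take_eq_blk w hlen (hsep m (by omega) (by omega)) hbits
      have hw : w = blk m (v+1) ++ w.drop (m+1) := by
        conv_lhs => rw [← List.take_append_drop (m+1) w]
        rw [htake]
      have h2 : AA m (Cfg m (v+1)) (w.drop (m+1)) := by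
        have h3 : AA m (Cfg m v) (blk m (v+1) ++ w.drop (m+1)) := by rw [← hw]; exact h
        have h4 := AA_append h3
        rwa [Reach_Cfg_blk hm (by omega)] at h4
      have h5 := master_lb hm d (v+1) (by omega) _ h2
      have hdlen : (w.drop (m+1)).length = w.length - (m+1) := by simp
      have : (d+1) * (m+1) = d * (m+1) + (m+1) := by ring
      omega

/-- Any accepted word from the initial state has length at least `2^m`. -/
lemma Kp_start_lb (hm : 1 ≤ m) (w : List (Fin 5)) (h : AA m {.start} w) :
    2^m ≤ w.length := by
  have hpow : 1 ≤ 2^m := Nat.one_le_two_pow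
  have hne : w ≠ [] := by
    rintro rfl
    have := h .start rfl
    simp [lab] at this
  obtain ⟨x, w', rfl⟩ := List.exists_cons_of_ne_nil hne
  set w := x :: w' with hwdef
  have hI5 : AA m (I5 m) w := by
    intro q hq
    exact h q (by rw [Reach_start_cons]; exact hq)
  have hz := AA_z_extract (m+1) 0 (by omega) (by omega) w
    (AA_of_mem (by unfold I5; right; left; rfl) hI5)
  obtain ⟨hlen, hbit, _⟩ := hz
  have hbits : ∀ l, l < m → w[l]! = bL ((0:ℕ).testBit l) := by
    intro l hl
    rw [Nat.zero_testBit]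
    exact (hbit l (by omega)).1 (by omega)
  have htake : w.take (m+1) = blk m 0 := by
    apply List.ext_getElem
    · rw [List.length_take, blk_length]; omega
    · intro l h1 h2
      have hlm : l < m + 1 := by rw [blk_length] at h2; omega
      have hlw : l < w.length := by omega
      rw [List.getElem_take]
      rw [← getElem!_pos w l hlw, ← getElem!_pos (blk m 0) l h2]
      rcases Nat.lt_or_ge l m with hcase | hcase
      · rw [hbits l hcase, blk_getElem_bit 0 l hcase]
      · have hlm' : l = m := by omega
        rw [hlm']
        rw [(hbit m (by omega)).2 (by omega), blk_getElem_sep]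
  have hw : w = blk m 0 ++ w.drop (m+1) := by
    conv_lhs => rw [← List.take_append_drop (m+1) w]
    rw [htake]
  have h2 : AA m (Cfg m 0) (w.drop (m+1)) := by
    have h3 : AA m (I5 m) (blk m 0 ++ w.drop (m+1)) := by rw [← hw]; exact hI5
    have h4 := AA_append h3
    rwa [Reach_I5_blk0 hm] at h4
  have h5 := master_lb hm (2^m - 1) 0 (by omega) _ h2
  have hdlen : (w.drop (m+1)).length = w.length - (m+1) := by simp
  have hprod : (2^m - 1) * (m+1) + (m+1) = 2^m * (m+1) := by
    have : 2^m - 1 + 1 = 2^m := by omega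
    calc (2^m - 1) * (m+1) + (m+1) = (2^m - 1 + 1) * (m+1) := by ring
    _ = 2^m * (m+1) := by rw [this]
  have hfin : 2^m ≤ 2^m * (m+1) := Nat.le_mul_of_pos_right _ (by omega)
  omega

end Master2
/-! ### The positive direction: the counting word is accepted -/

section Positive

variable {m : ℕ}

lemma Reach_Cfg_chain (hm : 1 ≤ m) : ∀ (d v : ℕ), v + d = 2^m - 1 →
    Reach (Kp m) (Cfg m v) ((List.range' (v+1) d).flatMap (blk m)) = Cfg m (2^m - 1)
  | 0, v, hdv => by
      have : v = 2^m - 1 := by omega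
      subst this
      rfl
  | (d+1), v, hdv => by
      have hpow : 1 ≤ 2^m := Nat.one_le_two_pow
      rw [List.range'_succ, List.flatMap_cons, Reach_append,
        Reach_Cfg_blk hm (by omega)]
      exact Reach_Cfg_chain hm d (v+1) (by omega)

/-- The full counting word. -/
def vword (m : ℕ) : List (Fin 5) := (List.range (2^m)).flatMap (blk m)

lemma vword_split : vword m = blk m 0 ++ (List.range' 1 (2^m - 1)).flatMap (blk m) := by
  have hpow : 1 ≤ 2^m := Nat.one_le_two_pow
  unfold vword
  rw [List.range_eq_range', show 2^m = (2^m - 1) + 1 by omega, List.range'_succ,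
    List.flatMap_cons]
  norm_num

lemma vword_ne_nil : vword m ≠ [] := by
  rw [vword_split]
  intro hc
  rw [List.append_eq_nil_iff] at hc
  have := blk_length (m := m) (u := 0)
  rw [hc.1] at this
  simp at this

lemma Reach_start (w : List (Fin 5)) (hne : w ≠ []) :
    Reach (Kp m) {.start} w = Reach (Kp m) (I5 m) w := by
  obtain ⟨x, w', rfl⟩ := List.exists_cons_of_ne_nil hne
  exact Reach_start_cons x w'

lemma Reach_start_vword (hm : 1 ≤ m) :
    Reach (Kp m) {.start} (vword m) = Cfg m (2^m - 1) := by
  rw [Reach_start _ vword_ne_nil, vword_split, Reach_append, Reach_I5_blk0 hm,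
    Reach_Cfg_chain hm (2^m - 1) 0 (by omega)]

lemma lab_Cfg_final {q : St m} (hq : q ∈ Cfg m (2^m - 1)) : () ∈ lab m q := by
  unfold Cfg skipsC at hq
  rcases hq with rfl | h
  · simp [lab]
  rcases h with rfl | h
  · simp [lab]
  rcases h with rfl | h
  · simp [lab]
  rcases h with rfl | h
  · simp [lab]
  rcases h with rfl | h
  · simp [lab]
  obtain ⟨l, hl, rfl⟩ := h
  simp [lab]

lemma AA_start_vword (hm : 1 ≤ m) : AA m {.start} (vword m) := by
  intro q hq
  rw [Reach_start_vword hm] at hq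
  exact lab_Cfg_final hq

/-- The box word of the counting word separates `Kp m` from `NK`. -/
lemma Kp_sat_boxword (hm : 1 ≤ m) : MLsatK (Kp m) (boxword (vword m)) := by
  intro q hq
  have hq' : q = .start := hq
  subst hq'
  rw [sat_boxword]
  exact AA_start_vword hm

/-- Main lower bound: any monotone ∨-free formula true in `Kp m` and false in
`NK` has at least `2^m + 1` distinct subformulas. -/
lemma lower_main (hm : 1 ≤ m) {φ : MLFormula Unit (Fin 5)} (hMon : Mon φ)
    (hpos : MLsatK (Kp m) φ) (hneg : ¬ MLsatK NK φ) : 2^m + 1 ≤ MLsz φ := by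
  have hn0 : ¬ MLsat NK φ NSt.n0 := by
    intro hsat
    exact hneg (fun q hq => by
      have : q = NSt.n0 := hq
      subst this
      exact hsat)
  obtain ⟨w, hw⟩ := NK_skel_extract hMon hn0
  have hstart : MLsat (Kp m) φ .start := hpos .start rfl
  have hAA : AA m {.start} w := hw.truth hstart
  have hlen := Kp_start_lb hm w hAA
  have hsz := hw.size_lb
  omega

end Positive
/-! ### Assembly: the two cases and the final theorem -/

section Assembly

lemma Mon'_boxword {A : Type} (w : List A) : Mon' (boxword w) := by
  induction w with
  | nil => trivial
  | cons x w ih => exact ih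

lemma Kripke_ne {K1 K2 : Kripke Unit (Fin 5)}
    (h : Fintype.card K1.Q ≠ Fintype.card K2.Q) : K1 ≠ K2 := by
  intro hc
  subst hc
  exact h rfl

lemma card_Kp (m : ℕ) : Fintype.card (Kp m).Q = Fintype.card (St m) := rfl

lemma card_NK : Fintype.card NK.Q = 2 := rfl

lemma dual_pos_sat (w : List (Fin 5)) : MLsatK (dualK NK) (diaword w) := by
  intro q hq
  have hq' : q = NSt.n0 := hq
  subst hq'
  rw [← dualF_boxword, sat_dualK (NN_of_Mon' (Mon'_boxword w))]
  exact NK_not_sat_boxword w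

lemma dual_neg_sat {m : ℕ} (hm : 1 ≤ m) :
    ¬ MLsatK (dualK (Kp m)) (diaword (vword m)) := by
  intro h
  have h1 := h .start rfl
  rw [← dualF_boxword, sat_dualK (NN_of_Mon' (Mon'_boxword _))] at h1
  exact h1 (Kp_sat_boxword hm .start rfl)

lemma lower_dual {m : ℕ} (hm : 1 ≤ m) {φ : MLFormula Unit (Fin 5)} (hM : Mon' φ)
    (hpos : MLsatK (dualK NK) φ) (hneg : ¬ MLsatK (dualK (Kp m)) φ) :
    2^m + 1 ≤ MLsz φ := by
  have hNNφ := NN_of_Mon' hM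
  have hMonψ : Mon (dualF φ) := Mon_dualF hM
  have hdd : dualF (dualF φ) = φ := dualF_dualF hNNφ
  have hNNψ : NN (dualF φ) := NN_of_Mon hMonψ
  have hsatn0 : MLsat (dualK NK) φ NSt.n0 := hpos _ rfl
  have hψn0 : ¬ MLsat NK (dualF φ) NSt.n0 := by
    rw [← hdd] at hsatn0
    exact (sat_dualK hNNψ _).1 hsatn0
  have hψstart : MLsat (Kp m) (dualF φ) .start := by
    by_contra hc
    apply hneg
    intro q hq
    have hq' : q = .start := hq
    subst hq'
    rw [← hdd]
    exact (sat_dualK hNNψ _).2 hc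
  have hmain := lower_main hm hMonψ
    (fun q hq => by
      have hq' : q = .start := hq
      subst hq'
      exact hψstart)
    (fun hc => hψn0 (hc _ rfl))
  rwa [MLsz_dualF hNNφ] at hmain

end Assembly
/-- **Proposition (lower bound for modal logic).** Let `Prop = {p}` (the type
`Unit`) and `Act = {a,b,c,d,e}` (the type `Fin 5`).  For every monotone fragment
`F` of `ML(Prop, Act)` containing `p`, with no `⟨α⟩^{≥k}` for `k ≥ 2`, containing
all boxes or all diamonds, containing all boxes if it has `∧`, and all diamonds if
it has `∨`: for every `n` there is a sample of Kripke structures of total number of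
states `k ≥ n` which is separable by a fragment formula, and such that every
separating fragment formula has size at least `2^(k/25)`. -/
theorem ml_lower_bound (F : MLFragment Unit (Fin 5))
    (hmonoNot : ¬ F.hasNot) (hmonoOrAnd : ¬ F.hasOr ∨ ¬ F.hasAnd)
    (hatom : () ∈ F.atoms)
    (hdia2 : ∀ (α : Fin 5) (k : ℕ+), 2 ≤ (k : ℕ) → (α, k) ∉ F.dias)
    (hboxdia : (∀ α : Fin 5, α ∈ F.boxes) ∨ (∀ α : Fin 5, (α, (1 : ℕ+)) ∈ F.dias))
    (hand : F.hasAnd → ∀ α : Fin 5, α ∈ F.boxes)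
    (hor : F.hasOr → ∀ α : Fin 5, (α, (1 : ℕ+)) ∈ F.dias) :
    ∀ n : ℕ, ∃ Pos Neg : Finset (Kripke Unit (Fin 5)),
      n ≤ ∑ K ∈ Pos ∪ Neg, Fintype.card K.Q ∧
      (∃ φ : MLFormula Unit (Fin 5), F.Mem φ ∧
          (∀ K ∈ Pos, MLsatK K φ) ∧ (∀ K ∈ Neg, ¬ MLsatK K φ)) ∧
      (∀ φ : MLFormula Unit (Fin 5), F.Mem φ →
          (∀ K ∈ Pos, MLsatK K φ) → (∀ K ∈ Neg, ¬ MLsatK K φ) →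
          (2 : ℝ) ^ (((∑ K ∈ Pos ∪ Neg, Fintype.card K.Q : ℕ) : ℝ) / 25) ≤
            (MLsz φ : ℝ)) := by
  intro n
  set m := max n 2 with hm_def
  have hm2 : 2 ≤ m := le_max_right n 2
  have hm1 : 1 ≤ m := by omega
  have hcard_le := card_St_le (m := m) hm1
  have hcard_ge := card_St_ge (m := m)
  have hnm : n ≤ m := le_max_left n 2
  have hk25 : Fintype.card (St m) + 2 ≤ 25 * m := by omega
  have hcard3 : 3 ≤ Fintype.card (St m) := by omega
  -- the common real-number bound
  have hreal : ∀ (k : ℕ) (φ : MLFormula Unit (Fin 5)), k ≤ 25 * m →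
      2^m + 1 ≤ MLsz φ →
      (2 : ℝ) ^ (((k : ℕ) : ℝ) / 25) ≤ (MLsz φ : ℝ) := by
    intro k φ hk hsz
    have h1 : ((k : ℕ) : ℝ) / 25 ≤ (m : ℝ) := by
      rw [div_le_iff₀ (by norm_num : (0:ℝ) < 25)]
      have : ((k : ℕ) : ℝ) ≤ ((25 * m : ℕ) : ℝ) := Nat.cast_le.2 hk
      push_cast at this
      linarith
    calc (2 : ℝ) ^ (((k : ℕ) : ℝ) / 25)
        ≤ (2 : ℝ) ^ ((m : ℕ) : ℝ) :=
          Real.rpow_le_rpow_of_exponent_le (by norm_num) h1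
      _ = ((2^m : ℕ) : ℝ) := by
          rw [Real.rpow_natCast]
          push_cast
          ring
      _ ≤ (MLsz φ : ℝ) := by
          have : (2^m : ℕ) ≤ MLsz φ := by omega
          exact_mod_cast this
  have hcases : (¬ F.hasOr ∧ ∀ α : Fin 5, α ∈ F.boxes) ∨
      (¬ F.hasAnd ∧ ∀ α : Fin 5, (α, (1:ℕ+)) ∈ F.dias) := by
    by_cases ho : F.hasOr
    · rcases hmonoOrAnd with h | h
      · exact absurd ho h
      · exact Or.inr ⟨h, hor ho⟩
    · by_cases ha : F.hasAnd
      · exact Or.inl ⟨ho, hand ha⟩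
      · rcases hboxdia with h | h
        · exact Or.inl ⟨ho, h⟩
        · exact Or.inr ⟨ha, h⟩
  rcases hcases with ⟨hno, hbox⟩ | ⟨hna, hdia⟩
  · -- Case A: all boxes, no disjunction
    refine ⟨{Kp m}, {NK}, ?_, ?_, ?_⟩
    case _ =>
      have hne : (Kp m) ≠ NK := Kripke_ne (by rw [card_Kp, card_NK]; omega)
      have hsum : ∑ K ∈ ({Kp m} ∪ {NK} : Finset (Kripke Unit (Fin 5))), Fintype.card K.Q
          = Fintype.card (St m) + 2 := by
        rw [← Finset.insert_eq, Finset.sum_insert (by simp [hne]), Finset.sum_singleton]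
        rfl
      rw [hsum]
      omega
    case _ =>
      refine ⟨boxword (vword m), Mem_boxword hatom hbox _, ?_, ?_⟩
      · intro K hK
        rw [Finset.mem_singleton] at hK
        subst hK
        exact Kp_sat_boxword hm1
      · intro K hK
        rw [Finset.mem_singleton] at hK
        subst hK
        intro hc
        exact NK_not_sat_boxword (vword m) (hc _ rfl)
    case _ =>
      intro φ hMem hP hN
      have hMon := Mem_Mon hmonoNot hno hdia2 hMem
      have hlow := lower_main hm1 hMon
        (hP _ (Finset.mem_singleton_self _))
        (hN _ (Finset.mem_singleton_self _))
      have hne : (Kp m) ≠ NK := Kripke_ne (by rw [card_Kp, card_NK]; omega)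
      have hsum : ∑ K ∈ ({Kp m} ∪ {NK} : Finset (Kripke Unit (Fin 5))), Fintype.card K.Q
          = Fintype.card (St m) + 2 := by
        rw [← Finset.insert_eq, Finset.sum_insert (by simp [hne]), Finset.sum_singleton]
        rfl
      rw [hsum]
      exact hreal _ φ hk25 hlow
  · -- Case B: all diamonds, no conjunction
    refine ⟨{dualK NK}, {dualK (Kp m)}, ?_, ?_, ?_⟩
    case _ =>
      have hne : dualK NK ≠ dualK (Kp m) := Kripke_ne (by
        show Fintype.card NSt ≠ Fintype.card (St m)
        rw [NSt_card]
        omega)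
      have hsum : ∑ K ∈ ({dualK NK} ∪ {dualK (Kp m)} : Finset (Kripke Unit (Fin 5))),
          Fintype.card K.Q = 2 + Fintype.card (St m) := by
        rw [← Finset.insert_eq, Finset.sum_insert (by simp [hne]), Finset.sum_singleton]
        rfl
      rw [hsum]
      omega
    case _ =>
      refine ⟨diaword (vword m), Mem_diaword hatom hdia _, ?_, ?_⟩
      · intro K hK
        rw [Finset.mem_singleton] at hK
        subst hK
        exact dual_pos_sat (vword m)
      · intro K hK
        rw [Finset.mem_singleton] at hK
        subst hK
        exact dual_neg_sat hm1
    case _ =>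
      intro φ hMem hP hN
      have hMon' := Mem_Mon' hmonoNot hna hdia2 hMem
      have hlow := lower_dual hm1 hMon'
        (hP _ (Finset.mem_singleton_self _))
        (hN _ (Finset.mem_singleton_self _))
      have hne : dualK NK ≠ dualK (Kp m) := Kripke_ne (by
        show Fintype.card NSt ≠ Fintype.card (St m)
        rw [NSt_card]
        omega)
      have hsum : ∑ K ∈ ({dualK NK} ∪ {dualK (Kp m)} : Finset (Kripke Unit (Fin 5))),
          Fintype.card K.Q = 2 + Fintype.card (St m) := by
        rw [← Finset.insert_eq, Finset.sum_insert (by simp [hne]), Finset.sum_singleton]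
        rfl
      rw [hsum]
      exact hreal _ φ (by omega) hlow
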